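/- For any complex number z with Re z > 0 and any real λ ≥ 0, one has |sinh(λ z)/z| ≤ (e^{λ Re z} − 1)/Re z. -/

import Mathlib

open intervalIntegral in
theorem abs_sinh_div_le (z : ℂ) (hz : 0 < z.re) (lam : ℝ) (hlam : 0 ≤ lam) :
    ‖Complex.sinh (lam * z) / z‖ ≤ (Real.exp (lam * z.re) - 1) / z.re := by
  have hz0 : z ≠ 0 := fun h => by simp [h] at hz
  have hre : z.re ≠ 0 := ne_of_gt hz
  -- derivative facts
  have hderiv : ∀ s : ℝ, HasDerivAt (fun t : ℝ => Complex.sinh (t * z) / z)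
      (Complex.cosh (s * z)) s := by
    intro s
    have h1 : HasDerivAt (fun w : ℂ => Complex.sinh (w * z)) (z * Complex.cosh (s * z)) s := by
      have := (Complex.hasDerivAt_sinh ((s : ℂ) * z)).comp (s : ℂ)
        ((hasDerivAt_id (s : ℂ)).mul_const z)
      simpa [mul_comm, Function.comp_def] using this
    have h2 := (h1.comp_ofReal).div_const z
    simpa [mul_div_assoc, mul_div_cancel_left₀ _ hz0] using h2
  have hcont : ContinuousOn (fun s : ℝ => Complex.cosh (s * z)) (Set.uIcc 0 lam) :=
    (Complex.continuous_cosh.comp (Complex.continuous_ofReal.mul continuous_const)).continuousOn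
  have hint : Complex.sinh (lam * z) / z
      = ∫ s in (0:ℝ)..lam, Complex.cosh (s * z) := by
    have := intervalIntegral.integral_eq_sub_of_hasDerivAt
      (fun s _ => hderiv s) (hcont.intervalIntegrable)
    simp at this
    rw [this]
  have hderivg : ∀ s : ℝ, HasDerivAt (fun t : ℝ => Real.exp (t * z.re) / z.re)
      (Real.exp (s * z.re)) s := by
    intro s
    have h1 : HasDerivAt (fun t : ℝ => Real.exp (t * z.re)) (Real.exp (s * z.re) * z.re) s := by
      have := (Real.hasDerivAt_exp (s * z.re)).comp s ((hasDerivAt_id s).mul_const z.re)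
      simpa [Function.comp_def] using this
    have := h1.div_const z.re
    simpa [mul_div_assoc, mul_div_cancel_left₀, hre] using this
  have hgcont : ContinuousOn (fun s : ℝ => Real.exp (s * z.re)) (Set.uIcc 0 lam) :=
    (Real.continuous_exp.comp (continuous_id.mul continuous_const)).continuousOn
  have hgint : (∫ s in (0:ℝ)..lam, Real.exp (s * z.re))
      = (Real.exp (lam * z.re) - 1) / z.re := by
    have := intervalIntegral.integral_eq_sub_of_hasDerivAt
      (fun s _ => hderivg s) (hgcont.intervalIntegrable)
    rw [this]
    simp [sub_div]
  rw [hint, ← hgint]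
  have hb : ∀ᵐ (s : ℝ) ∂(MeasureTheory.volume.restrict (Set.uIoc (0:ℝ) lam)),
      ‖Complex.cosh (s * z)‖ ≤ Real.exp (s * z.re) := by
    filter_upwards [MeasureTheory.ae_restrict_mem measurableSet_Ioc] with s hs
    rw [Set.uIoc_of_le hlam] at hs
    have hs0 : 0 ≤ s := le_of_lt hs.1
    have hmono : Real.exp (-(s * z.re)) ≤ Real.exp (s * z.re) := by
      apply Real.exp_le_exp.mpr
      nlinarith [mul_nonneg hs0 hz.le]
    calc ‖Complex.cosh (s * z)‖ = ‖(Complex.exp (s * z) + Complex.exp (-(s * z))) / 2‖ := by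
          rw [Complex.cosh]
      _ ≤ (‖Complex.exp (s * z)‖ + ‖Complex.exp (-(s * z))‖) / 2 := by
          rw [norm_div]
          have h2 : ‖(2:ℂ)‖ = 2 := by norm_num
          rw [h2]
          gcongr
          exact norm_add_le _ _
      _ = (Real.exp (s * z.re) + Real.exp (-(s * z.re))) / 2 := by
          simp [Complex.norm_exp]
      _ ≤ Real.exp (s * z.re) := by linarith
  have h1 := intervalIntegral.norm_integral_le_abs_of_norm_le hb (hgcont.intervalIntegrable)
  refine h1.trans (le_of_eq (abs_of_nonneg ?_))
  rw [hgint]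
  have : (1:ℝ) ≤ Real.exp (lam * z.re) := by
    rw [← Real.exp_zero]
    exact Real.exp_le_exp.mpr (mul_nonneg hlam hz.le)
  exact div_nonneg (by linarith) hz.le
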